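/- Let G be a graph of order n. Then there exists a subset T ⊆ V(G) with |T| ≤ β(G) such that β(G) = (n - o(G - T) + |T|)/2, where o(G - T) is the number of odd components of G - T; moreover each odd component of G - T is factor-critical and each even component of G - T has a perfect matching. -/

import Mathlib

set_option linter.unusedSectionVars false
set_option maxHeartbeats 1000000


open SimpleGraph

/-- `H` is a minor of `G`: disjoint nonempty connected branch sets, one per vertex of `H`,
with an edge of `G` between branch sets corresponding to each edge of `H`. -/
def HasMinor {V W : Type*} (G : SimpleGraph V) (H : SimpleGraph W) : Prop :=
  ∃ f : W → Set V,
    (∀ w, (f w).Nonempty) ∧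
    (∀ w, (G.induce (f w)).Connected) ∧
    (Pairwise fun w₁ w₂ => Disjoint (f w₁) (f w₂)) ∧
    ∀ ⦃w₁ w₂⦄, H.Adj w₁ w₂ → ∃ v₁ ∈ f w₁, ∃ v₂ ∈ f w₂, G.Adj v₁ v₂

/-- A graph is outerplanar iff it has no `K₄`-minor and no `K_{2,3}`-minor. -/
def Outerplanar {V : Type*} (G : SimpleGraph V) : Prop :=
  ¬ HasMinor G (completeGraph (Fin 4)) ∧
  ¬ HasMinor G (completeBipartiteGraph (Fin 2) (Fin 3))

/-- A maximal outerplanar graph: outerplanar and no edge can be added keeping outerplanarity. -/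
def MaximalOuterplanar {V : Type*} (G : SimpleGraph V) : Prop :=
  Outerplanar G ∧ ∀ u v : V, u ≠ v → ¬ G.Adj u v →
    ¬ Outerplanar (G ⊔ fromEdgeSet {s(u, v)})

/-- `M` is a matching (a set of pairwise disjoint edges) of the graph `G`. -/
def IsMatchingSet {V : Type*} (G : SimpleGraph V) (M : Finset (Sym2 V)) : Prop :=
  (∀ e ∈ M, e ∈ G.edgeSet) ∧
  ∀ e ∈ M, ∀ f ∈ M, e ≠ f → ∀ v : V, v ∈ e → v ∉ f

/-- `M` is a rainbow matching of size `k` in `G` under edge-coloring `c`. -/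
def IsRainbowMatching {V : Type*} (G : SimpleGraph V) (c : Sym2 V → ℕ) (k : ℕ)
    (M : Finset (Sym2 V)) : Prop :=
  IsMatchingSet G M ∧ M.card = k ∧ Set.InjOn c ↑M

/-- The matching number of `G`. -/
noncomputable def matchingNumber {V : Type*} (G : SimpleGraph V) : ℕ :=
  sSup {k | ∃ M : Finset (Sym2 V), IsMatchingSet G M ∧ M.card = k}

/-- The vertex set (in `V`) of a connected component of `G - T`. -/
def compSupp {V : Type*} (G : SimpleGraph V) (T : Finset V)
    (c : (G.induce ((↑T : Set V)ᶜ)).ConnectedComponent) : Set V :=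
  Subtype.val '' c.supp

/-- The number of odd components of `G - T`. -/
noncomputable def oddComponents {V : Type*} (G : SimpleGraph V) (T : Finset V) : ℕ :=
  {c : (G.induce ((↑T : Set V)ᶜ)).ConnectedComponent | Odd (compSupp G T c).ncard}.ncard

/-- `G` has a matching whose edges lie in `S` and which covers every vertex of `S`. -/
def HasPerfectMatchingOn {V : Type*} (G : SimpleGraph V) (S : Set V) : Prop :=
  ∃ M : Finset (Sym2 V), IsMatchingSet G M ∧
    (∀ e ∈ M, ∀ v : V, v ∈ e → v ∈ S) ∧ ∀ v ∈ S, ∃ e ∈ M, v ∈ e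

namespace GE
variable {V : Type*} [Fintype V] {G : SimpleGraph V} {A : Finset V}

def cov {V : Type*} (M : Finset (Sym2 V)) (v : V) : Prop := ∃ e ∈ M, v ∈ e
def inA {V : Type*} (A : Finset V) (M : Finset (Sym2 V)) : Prop := ∀ e ∈ M, ∀ v ∈ e, v ∈ A
def good {V : Type*} (G : SimpleGraph V) (A : Finset V) (M : Finset (Sym2 V)) : Prop :=
  IsMatchingSet G M ∧ inA A M
noncomputable def nu {V : Type*} (G : SimpleGraph V) (A : Finset V) : ℕ :=
  sSup {k | ∃ M : Finset (Sym2 V), good G A M ∧ M.card = k}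
def csupp {V : Type*} (G : SimpleGraph V) (s : Set V)
    (c : (G.induce s).ConnectedComponent) : Set V :=
  Subtype.val '' c.supp
def maxMissing {V : Type*} (G : SimpleGraph V) (A : Finset V) : Prop :=
  ∀ x ∈ A, ∃ N, good G A N ∧ N.card = nu G A ∧ ¬ cov N x

lemma mem_unique {M : Finset (Sym2 V)} (hM : IsMatchingSet G M) {e f : Sym2 V} {v : V}
    (he : e ∈ M) (hf : f ∈ M) (hv : v ∈ e) (hv' : v ∈ f) : e = f := by
  by_contra h
  exact hM.2 e he f hf h v hv hv'

lemma step_unique {M : Finset (Sym2 V)} (hM : IsMatchingSet G M) {v w w' : V}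
    (h1 : s(v, w) ∈ M) (h2 : s(v, w') ∈ M) : w = w' := by
  have he := mem_unique hM h1 h2 (Sym2.mem_mk_left v w) (Sym2.mem_mk_left v w')
  exact Sym2.congr_right.mp he

lemma exists_partner {M : Finset (Sym2 V)} (hM : IsMatchingSet G M) {e : Sym2 V} {v : V}
    (he : e ∈ M) (hv : v ∈ e) : ∃ w, e = s(v, w) ∧ G.Adj v w := by
  obtain ⟨w, rfl⟩ := Sym2.mem_iff_exists.mp hv
  exact ⟨w, rfl, (G.mem_edgeSet).mp (hM.1 _ he)⟩

lemma good_empty (A : Finset V) : good G A (∅ : Finset (Sym2 V)) :=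
  ⟨⟨fun e he => absurd he (Finset.notMem_empty e), fun e he => absurd he (Finset.notMem_empty e)⟩,
    fun e he => absurd he (Finset.notMem_empty e)⟩

lemma nu_bddAbove (A : Finset V) :
    BddAbove {k | ∃ M : Finset (Sym2 V), good G A M ∧ M.card = k} := by
  classical
  exact ⟨Fintype.card (Sym2 V), fun k ⟨M, _, hk⟩ => hk ▸ Finset.card_le_univ M⟩

lemma card_le_nu {A : Finset V} {M : Finset (Sym2 V)} (h : good G A M) : M.card ≤ nu G A :=
  le_csSup (nu_bddAbove A) ⟨M, h, rfl⟩

lemma exists_maxM (G : SimpleGraph V) (A : Finset V) :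
    ∃ M, good G A M ∧ M.card = nu G A := by
  have h := Nat.sSup_mem (s := {k | ∃ M : Finset (Sym2 V), good G A M ∧ M.card = k})
    ⟨0, ∅, good_empty A, Finset.card_empty⟩ (nu_bddAbove A)
  obtain ⟨M, hM, hcard⟩ := h
  exact ⟨M, hM, hcard⟩

lemma evens_card (m : ℕ) :
    ((Finset.range m).filter (fun i => Even i)).card = (m + 1) / 2 := by
  classical
  have h : (Finset.range m).filter (fun i => Even i)
      = (Finset.range ((m+1)/2)).image (fun k => 2 * k) := by
    ext x
    simp only [Finset.mem_filter, Finset.mem_range, Finset.mem_image]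
    constructor
    · rintro ⟨hx, k, rfl⟩
      exact ⟨k, by omega, by ring⟩
    · rintro ⟨k, hk, rfl⟩
      exact ⟨by omega, k, by ring⟩
  rw [h, Finset.card_image_of_injective _ (fun a b h => by omega), Finset.card_range]

lemma odds_card (m : ℕ) :
    ((Finset.range m).filter (fun i => ¬ Even i)).card = m / 2 := by
  classical
  have h : (Finset.range m).filter (fun i => ¬ Even i)
      = (Finset.range (m/2)).image (fun k => 2 * k + 1) := by
    ext x
    simp only [Finset.mem_filter, Finset.mem_range, Finset.mem_image, Nat.even_iff, Nat.not_even_iff]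
    constructor
    · rintro ⟨hx, hodd⟩
      exact ⟨x / 2, by omega, by omega⟩
    · rintro ⟨k, hk, rfl⟩
      exact ⟨by omega, by omega⟩
  rw [h, Finset.card_image_of_injective _ (fun a b h => by omega), Finset.card_range]

/-- Abstract swap: replace the path edges of `Y` by the path edges of `Z`. -/
lemma swap_core [DecidableEq (Sym2 V)] {Y Z PY PZ : Finset (Sym2 V)} {W : Set V}
    (hY : IsMatchingSet G Y) (hZ : IsMatchingSet G Z)
    (hYA : inA A Y) (hZA : inA A Z) (hPY : PY ⊆ Y) (hPZ : PZ ⊆ Z)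
    (hYW : ∀ e ∈ Y, ∀ v ∈ e, v ∈ W → e ∈ PY) (hZW : ∀ e ∈ PZ, ∀ v ∈ e, v ∈ W) :
    good G A ((Y \ PY) ∪ PZ) ∧ ((Y \ PY) ∪ PZ).card + PY.card = Y.card + PZ.card := by
  have hdisj : Disjoint (Y \ PY) PZ := by
    rw [Finset.disjoint_left]
    intro e he hePZ
    rw [Finset.mem_sdiff] at he
    exact he.2 (hYW e he.1 e.out.1 (Sym2.out_fst_mem e) (hZW e hePZ _ (Sym2.out_fst_mem e)))
  refine ⟨⟨⟨?_, ?_⟩, ?_⟩, ?_⟩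
  · intro e he
    rcases Finset.mem_union.mp he with h | h
    · exact hY.1 e (Finset.mem_sdiff.mp h).1
    · exact hZ.1 e (hPZ h)
  · intro e he f hf hef v hve hvf
    rcases Finset.mem_union.mp he with h | h <;> rcases Finset.mem_union.mp hf with h' | h'
    · exact hY.2 e (Finset.mem_sdiff.mp h).1 f (Finset.mem_sdiff.mp h').1 hef v hve hvf
    · exact (Finset.mem_sdiff.mp h).2 (hYW e (Finset.mem_sdiff.mp h).1 v hve (hZW f h' v hvf))
    · exact (Finset.mem_sdiff.mp h').2 (hYW f (Finset.mem_sdiff.mp h').1 v hvf (hZW e h v hve))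
    · exact hZ.2 e (hPZ h) f (hPZ h') hef v hve hvf
  · intro e he v hv
    rcases Finset.mem_union.mp he with h | h
    · exact hYA e (Finset.mem_sdiff.mp h).1 v hv
    · exact hZA e (hPZ h) v hv
  · rw [Finset.card_union_of_disjoint hdisj, Finset.card_sdiff_of_subset hPY]
    have := Finset.card_le_card hPY
    omega



open scoped Classical in
/-- The greedy alternating walk starting at `w0`, alternating `M` (at even steps) and `N`. -/
noncomputable def walkF (M N : Finset (Sym2 V)) (w0 : V) : ℕ → V
  | 0 => w0
  | k + 1 =>
    if h : ∃ v, s(walkF M N w0 k, v) ∈ (if Even k then M else N) then h.choose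
    else walkF M N w0 k

open scoped Classical in
lemma walkF_succ {M N : Finset (Sym2 V)} {w0 : V} {k : ℕ}
    (h : ∃ v, s(walkF M N w0 k, v) ∈ (if Even k then M else N)) :
    s(walkF M N w0 k, walkF M N w0 (k + 1)) ∈ (if Even k then M else N) := by
  rw [walkF, dif_pos h]
  exact h.choose_spec

lemma walk_injOn {M N : Finset (Sym2 V)} {f : ℕ → V} {m : ℕ}
    (hM : IsMatchingSet G M) (hN : IsMatchingSet G N)
    (edge : ∀ i < m, s(f i, f (i + 1)) ∈ (if Even i then M else N))
    (h0 : ¬ cov N (f 0)) : Set.InjOn f (Set.Iic m) := by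
  classical
  have uniq : ∀ (k' : ℕ) {a b c : V}, s(a, b) ∈ (if Even k' then M else N) →
      s(a, c) ∈ (if Even k' then M else N) → b = c := by
    intro k' a b c h1 h2
    by_cases h : Even k'
    · rw [if_pos h] at h1 h2; exact step_unique hM h1 h2
    · rw [if_neg h] at h1 h2; exact step_unique hN h1 h2
  have iteMN : ∀ {p q : Prop} [Decidable p] [Decidable q], (p ↔ q) →
      (if p then M else N) = (if q then M else N) := fun h => if_congr h rfl rfl
  have ne_step : ∀ i < m, f i ≠ f (i + 1) := by
    intro i hi hc
    have h := edge i hi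
    by_cases hE : Even i
    · rw [if_pos hE] at h
      exact ((G.mem_edgeSet).mp (hM.1 _ h)).ne hc
    · rw [if_neg hE] at h
      exact ((G.mem_edgeSet).mp (hN.1 _ h)).ne hc
  have newvert : ∀ k, k < m → Set.InjOn f (Set.Iic k) → ∀ i ≤ k, f (k + 1) ≠ f i := by
    intro k hk inj i hi hc
    have hstep : s(f k, f (k + 1)) ∈ (if Even k then M else N) := edge k hk
    have hik : i ≠ k := by
      rintro rfl
      exact ne_step i hk hc.symm
    have hilt : i < k := lt_of_le_of_ne hi hik
    have hstep' : s(f i, f k) ∈ (if Even k then M else N) := by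
      rw [hc] at hstep
      rwa [Sym2.eq_swap] at hstep
    rcases Nat.eq_zero_or_pos i with rfl | hipos
    · by_cases hEk : Even k
      · have h01 : s(f 0, f 1) ∈ M := by
          have := edge 0 (lt_trans hilt hk)
          rwa [if_pos Even.zero] at this
        have hfk : s(f 0, f k) ∈ M := by rwa [if_pos hEk] at hstep'
        have h1k : f k = f 1 := step_unique hM hfk h01
        have : k = 1 := inj (Set.mem_Iic.mpr le_rfl) (Set.mem_Iic.mpr hilt) h1k
        subst this
        exact (Nat.not_even_iff_odd.mpr (by decide)) hEk
      · rw [if_neg hEk] at hstep'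
        exact h0 ⟨_, hstep', Sym2.mem_mk_left _ _⟩
    · by_cases hpar : (Even i ↔ Even k)
      · have hiedge : s(f i, f (i + 1)) ∈ (if Even k then M else N) := by
          rw [← iteMN hpar]; exact edge i (lt_trans hilt hk)
        have : f (i + 1) = f k := uniq k hiedge hstep'
        have hik' : i + 1 = k := inj (Set.mem_Iic.mpr hilt) (Set.mem_Iic.mpr le_rfl) this
        rw [← hik'] at hpar
        rw [Nat.even_iff, Nat.even_iff] at hpar
        omega
      · obtain ⟨j, rfl⟩ : ∃ j, i = j + 1 := ⟨i - 1, by omega⟩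
        have hpar' : Even j ↔ Even k := by
          rw [Nat.even_iff, Nat.even_iff] at hpar ⊢
          omega
        have hiedge : s(f j, f (j + 1)) ∈ (if Even k then M else N) := by
          rw [← iteMN hpar']
          exact edge j (by omega)
        rw [Sym2.eq_swap] at hiedge
        have : f j = f k := uniq k hiedge hstep'
        have : j = k := inj (Set.mem_Iic.mpr (by omega)) (Set.mem_Iic.mpr le_rfl) this
        omega
  have main : ∀ b, b ≤ m → Set.InjOn f (Set.Iic b) := by
    intro b
    induction b with
    | zero =>
      intro _ a ha c hc _
      simp only [Set.mem_Iic, Nat.le_zero] at ha hc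
      rw [ha, hc]
    | succ b ih =>
      intro hb
      have injb := ih (by omega)
      intro a ha c hc hac
      simp only [Set.mem_Iic] at ha hc
      by_cases hA : a ≤ b <;> by_cases hC : c ≤ b
      · exact injb (Set.mem_Iic.mpr hA) (Set.mem_Iic.mpr hC) hac
      · have hc' : c = b + 1 := by omega
        subst hc'
        exact absurd hac.symm (newvert b (by omega) injb a hA)
      · have ha' : a = b + 1 := by omega
        subst ha'
        exact absurd hac (newvert b (by omega) injb c hC)
      · omega
  exact main m le_rfl

open scoped Classical in
lemma exchange {M N : Finset (Sym2 V)} (hM : IsMatchingSet G M) (hN : IsMatchingSet G N)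
    (hMA : inA A M) (hNA : inA A N) {w0 : V} (hw0M : cov M w0) (hw0N : ¬ cov N w0) :
    (∃ N', good G A N' ∧ N'.card = N.card + 1) ∨
    (∃ M' x, good G A M' ∧ M'.card = M.card ∧ ¬ cov M x ∧ x ≠ w0 ∧
      (∀ v, cov M' v ↔ ((cov M v ∧ v ≠ w0) ∨ v = x))) := by
  classical
  set f := walkF M N w0 with hfdef
  have hf0 : f 0 = w0 := rfl
  have hterm : ∃ k, ¬ ∃ v, s(f k, v) ∈ (if Even k then M else N) := by
    by_contra hall
    push_neg at hall
    have edges : ∀ i, s(f i, f (i + 1)) ∈ (if Even i then M else N) :=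
      fun i => walkF_succ (hall i)
    have inj : Set.InjOn f (Set.Iic (Fintype.card V)) :=
      walk_injOn hM hN (fun i _ => edges i) (hf0 ▸ hw0N)
    have hcard : ((Finset.range (Fintype.card V + 1)).image f).card
        = Fintype.card V + 1 := by
      rw [Finset.card_image_of_injOn, Finset.card_range]
      intro a ha b hb hab
      exact inj (Set.mem_Iic.mpr (by simpa using Nat.lt_succ_iff.mp (Finset.mem_range.mp ha)))
        (Set.mem_Iic.mpr (by simpa using Nat.lt_succ_iff.mp (Finset.mem_range.mp hb))) hab
    have := Finset.card_le_univ ((Finset.range (Fintype.card V + 1)).image f)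
    rw [hcard] at this
    omega
  set m := Nat.find hterm with hmdef
  have edge : ∀ i < m, s(f i, f (i + 1)) ∈ (if Even i then M else N) := by
    intro i hi
    exact walkF_succ (not_not.mp (Nat.find_min hterm hi))
  have hter : ¬ ∃ v, s(f m, v) ∈ (if Even m then M else N) := Nat.find_spec hterm
  have hm1 : 1 ≤ m := by
    by_contra h
    obtain ⟨e, he, hv⟩ := hw0M
    obtain ⟨w, rfl, _⟩ := exists_partner hM he hv
    apply hter
    have hm0 : m = 0 := by omega
    rw [hm0]
    exact ⟨w, by rw [if_pos Even.zero]; exact he⟩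
  have INJ : Set.InjOn f (Set.Iic m) := walk_injOn hM hN edge (hf0 ▸ hw0N)
  set PM := ((Finset.range m).filter (fun i => Even i)).image (fun i => s(f i, f (i + 1)))
    with hPMdef
  set PN := ((Finset.range m).filter (fun i => ¬ Even i)).image (fun i => s(f i, f (i + 1)))
    with hPNdef
  have hPMsub : PM ⊆ M := by
    intro e he
    obtain ⟨i, hi, rfl⟩ := Finset.mem_image.mp he
    rw [Finset.mem_filter, Finset.mem_range] at hi
    have := edge i hi.1
    rwa [if_pos hi.2] at this
  have hPNsub : PN ⊆ N := by
    intro e he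
    obtain ⟨i, hi, rfl⟩ := Finset.mem_image.mp he
    rw [Finset.mem_filter, Finset.mem_range] at hi
    have := edge i hi.1
    rwa [if_neg hi.2] at this
  set W : Set V := f '' Set.Iic m with hWdef
  have hWPM : ∀ e ∈ PM, ∀ v ∈ e, v ∈ W := by
    intro e he v hv
    obtain ⟨i, hi, rfl⟩ := Finset.mem_image.mp he
    rw [Finset.mem_filter, Finset.mem_range] at hi
    rcases Sym2.mem_iff.mp hv with rfl | rfl
    · exact ⟨i, Set.mem_Iic.mpr (by omega), rfl⟩
    · exact ⟨i + 1, Set.mem_Iic.mpr (by omega), rfl⟩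
  have hWPN : ∀ e ∈ PN, ∀ v ∈ e, v ∈ W := by
    intro e he v hv
    obtain ⟨i, hi, rfl⟩ := Finset.mem_image.mp he
    rw [Finset.mem_filter, Finset.mem_range] at hi
    rcases Sym2.mem_iff.mp hv with rfl | rfl
    · exact ⟨i, Set.mem_Iic.mpr (by omega), rfl⟩
    · exact ⟨i + 1, Set.mem_Iic.mpr (by omega), rfl⟩
  have fne : ∀ i ≤ m, ∀ j ≤ m, f i = f j → i = j := fun i hi j hj h =>
    INJ (Set.mem_Iic.mpr hi) (Set.mem_Iic.mpr hj) h
  have factM : ∀ e ∈ M, ∀ v ∈ e, v ∈ W → e ∈ PM := by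
    intro e he v hv hWv
    obtain ⟨i, hi, rfl⟩ := hWv
    rw [Set.mem_Iic] at hi
    by_cases hEi : Even i
    · by_cases him : i = m
      · exfalso
        apply hter
        obtain ⟨w, rfl, _⟩ := exists_partner hM he hv
        subst him
        exact ⟨w, by rw [if_pos hEi]; exact he⟩
      · have hedge := edge i (by omega)
        rw [if_pos hEi] at hedge
        have heq := mem_unique hM he hedge hv (Sym2.mem_mk_left _ _)
        rw [heq]
        exact Finset.mem_image.mpr ⟨i, Finset.mem_filter.mpr
          ⟨Finset.mem_range.mpr (by omega), hEi⟩, rfl⟩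
    · obtain ⟨j, rfl⟩ : ∃ j, i = j + 1 := ⟨i - 1, by
        rcases Nat.eq_zero_or_pos i with rfl | h
        · exact absurd Even.zero hEi
        · omega⟩
      have hEj : Even j := by
        rw [Nat.even_add_one] at hEi
        exact not_not.mp hEi
      have hedge := edge j (by omega)
      rw [if_pos hEj] at hedge
      have heq := mem_unique hM he hedge hv (Sym2.mem_mk_right _ _)
      rw [heq]
      exact Finset.mem_image.mpr ⟨j, Finset.mem_filter.mpr
        ⟨Finset.mem_range.mpr (by omega), hEj⟩, rfl⟩
  have factN : ∀ e ∈ N, ∀ v ∈ e, v ∈ W → e ∈ PN := by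
    intro e he v hv hWv
    obtain ⟨i, hi, rfl⟩ := hWv
    rw [Set.mem_Iic] at hi
    by_cases hEi : Even i
    · rcases Nat.eq_zero_or_pos i with rfl | hpos
      · exact absurd ⟨e, he, hf0 ▸ hv⟩ hw0N
      · obtain ⟨j, rfl⟩ : ∃ j, i = j + 1 := ⟨i - 1, by omega⟩
        have hEj : ¬ Even j := by
          rw [Nat.even_add_one] at hEi
          exact fun h => hEi h
        have hedge := edge j (by omega)
        rw [if_neg hEj] at hedge
        have heq := mem_unique hN he hedge hv (Sym2.mem_mk_right _ _)
        rw [heq]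
        exact Finset.mem_image.mpr ⟨j, Finset.mem_filter.mpr
          ⟨Finset.mem_range.mpr (by omega), hEj⟩, rfl⟩
    · by_cases him : i = m
      · exfalso
        apply hter
        obtain ⟨w, rfl, _⟩ := exists_partner hN he hv
        subst him
        exact ⟨w, by rw [if_neg hEi]; exact he⟩
      · have hedge := edge i (by omega)
        rw [if_neg hEi] at hedge
        have heq := mem_unique hN he hedge hv (Sym2.mem_mk_left _ _)
        rw [heq]
        exact Finset.mem_image.mpr ⟨i, Finset.mem_filter.mpr
          ⟨Finset.mem_range.mpr (by omega), hEi⟩, rfl⟩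
  have indInj : ∀ a ∈ Finset.range m, ∀ b ∈ Finset.range m,
      s(f a, f (a + 1)) = s(f b, f (b + 1)) → a = b := by
    intro a ha b hb hab
    rw [Finset.mem_range] at ha hb
    rcases Sym2.eq_iff.mp hab with ⟨h1, _⟩ | ⟨h1, h2⟩
    · exact fne a (by omega) b (by omega) h1
    · have e1 := fne a (by omega) (b + 1) (by omega) h1
      have e2 := fne (a + 1) (by omega) b (by omega) h2
      omega
  have cardPM : PM.card = (m + 1) / 2 := by
    rw [hPMdef, Finset.card_image_of_injOn (fun a ha b hb hab =>
      indInj a (Finset.mem_of_mem_filter a ha) b (Finset.mem_of_mem_filter b hb) hab),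
      evens_card]
  have cardPN : PN.card = m / 2 := by
    rw [hPNdef, Finset.card_image_of_injOn (fun a ha b hb hab =>
      indInj a (Finset.mem_of_mem_filter a ha) b (Finset.mem_of_mem_filter b hb) hab),
      odds_card]
  by_cases hEm : Even m
  · right
    obtain ⟨hgood, hcard⟩ := swap_core (A := A) hM hN hMA hNA hPMsub hPNsub factM hWPN
    have covP : ∀ i, 1 ≤ i → i ≤ m → ∃ e ∈ PN, f i ∈ e := by
      intro i h1 h2
      by_cases hEi : Even i
      · obtain ⟨j, rfl⟩ : ∃ j, i = j + 1 := ⟨i - 1, by omega⟩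
        have hEj : ¬ Even j := by
          rw [Nat.even_add_one] at hEi
          exact fun h => hEi h
        exact ⟨s(f j, f (j + 1)), Finset.mem_image.mpr ⟨j, Finset.mem_filter.mpr
          ⟨Finset.mem_range.mpr (by omega), hEj⟩, rfl⟩, Sym2.mem_mk_right _ _⟩
      · have hilt : i < m := lt_of_le_of_ne h2 (by rintro rfl; exact hEi hEm)
        exact ⟨s(f i, f (i + 1)), Finset.mem_image.mpr ⟨i, Finset.mem_filter.mpr
          ⟨Finset.mem_range.mpr hilt, hEi⟩, rfl⟩, Sym2.mem_mk_left _ _⟩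
    have covMid : ∀ i, 1 ≤ i → i < m → cov M (f i) := by
      intro i h1 h2
      by_cases hEi : Even i
      · have := edge i h2
        rw [if_pos hEi] at this
        exact ⟨_, this, Sym2.mem_mk_left _ _⟩
      · obtain ⟨j, rfl⟩ : ∃ j, i = j + 1 := ⟨i - 1, by omega⟩
        have hEj : Even j := by
          rw [Nat.even_add_one] at hEi
          exact not_not.mp hEi
        have := edge j (by omega)
        rw [if_pos hEj] at this
        exact ⟨_, this, Sym2.mem_mk_right _ _⟩
    refine ⟨(M \ PM) ∪ PN, f m, hgood, ?_, ?_, ?_, ?_⟩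
    · rw [cardPM, cardPN] at hcard
      rw [Nat.even_iff] at hEm
      omega
    · rintro ⟨e, he, hv⟩
      obtain ⟨w, rfl, _⟩ := exists_partner hM he hv
      exact hter ⟨w, by rw [if_pos hEm]; exact he⟩
    · rw [← hf0]
      intro h
      have := fne m le_rfl 0 (by omega) h
      omega
    · intro v
      constructor
      · rintro ⟨e, he, hv⟩
        rcases Finset.mem_union.mp he with h | h
        · rw [Finset.mem_sdiff] at h
          left
          refine ⟨⟨e, h.1, hv⟩, ?_⟩
          rintro rfl
          exact h.2 (factM e h.1 _ hv ⟨0, Set.mem_Iic.mpr (by omega), hf0⟩)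
        · obtain ⟨j, hj, rfl⟩ := Finset.mem_image.mp h
          rw [Finset.mem_filter, Finset.mem_range] at hj
          have hj1 : 1 ≤ j := by
            rcases Nat.eq_zero_or_pos j with rfl | h'
            · exact absurd Even.zero hj.2
            · exact h'
          rcases Sym2.mem_iff.mp hv with rfl | rfl
          · left
            refine ⟨covMid j hj1 hj.1, ?_⟩
            rw [← hf0]
            intro h'
            have := fne j (by omega) 0 (by omega) h'
            omega
          · by_cases hjm : j + 1 = m
            · right
              rw [hjm]
            · left
              refine ⟨covMid (j + 1) (by omega) (by omega), ?_⟩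
              rw [← hf0]
              intro h'
              have := fne (j + 1) (by omega) 0 (by omega) h'
              omega
      · rintro (⟨⟨e, he, hv⟩, hvne⟩ | rfl)
        · by_cases hPMe : e ∈ PM
          · obtain ⟨j, hj, rfl⟩ := Finset.mem_image.mp hPMe
            rw [Finset.mem_filter, Finset.mem_range] at hj
            rcases Sym2.mem_iff.mp hv with rfl | rfl
            · have hj1 : 1 ≤ j := by
                rcases Nat.eq_zero_or_pos j with rfl | h'
                · exact absurd hf0 hvne
                · exact h'
              obtain ⟨e', he', hv'⟩ := covP j hj1 (by omega)
              exact ⟨e', Finset.mem_union_right _ he', hv'⟩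
            · obtain ⟨e', he', hv'⟩ := covP (j + 1) (by omega) (by omega)
              exact ⟨e', Finset.mem_union_right _ he', hv'⟩
          · exact ⟨e, Finset.mem_union_left _ (Finset.mem_sdiff.mpr ⟨he, hPMe⟩), hv⟩
        · obtain ⟨e', he', hv'⟩ := covP m hm1 le_rfl
          exact ⟨e', Finset.mem_union_right _ he', hv'⟩
  · left
    obtain ⟨hgood, hcard⟩ := swap_core (A := A) hN hM hNA hMA hPNsub hPMsub factN hWPM
    refine ⟨(N \ PN) ∪ PM, hgood, ?_⟩
    rw [cardPM, cardPN] at hcard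
    rw [Nat.even_iff] at hEm
    omega

lemma induce_adj' {s : Set V} {a b : ↥s} : (G.induce s).Adj a b ↔ G.Adj ↑a ↑b := Iff.rfl

lemma mem_csupp {s : Set V} {c : (G.induce s).ConnectedComponent} {x : V} :
    x ∈ csupp G s c ↔ ∃ h : x ∈ s, (G.induce s).connectedComponentMk ⟨x, h⟩ = c := by
  constructor
  · rintro ⟨⟨y, hy⟩, hsupp, rfl⟩
    exact ⟨hy, (ConnectedComponent.mem_supp_iff _ _).mp hsupp⟩
  · rintro ⟨h, hc⟩
    exact ⟨⟨x, h⟩, (ConnectedComponent.mem_supp_iff _ _).mpr hc, rfl⟩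

lemma csupp_subset {s : Set V} {c : (G.induce s).ConnectedComponent} : csupp G s c ⊆ s := by
  rintro x ⟨⟨y, hy⟩, _, rfl⟩
  exact hy

lemma csupp_nonempty {s : Set V} (c : (G.induce s).ConnectedComponent) :
    (csupp G s c).Nonempty := by
  obtain ⟨⟨x, hx⟩, rfl⟩ := c.exists_rep
  exact ⟨x, mem_csupp.mpr ⟨hx, rfl⟩⟩

lemma csupp_closed {s : Set V} {c : (G.induce s).ConnectedComponent} {x y : V}
    (hx : x ∈ csupp G s c) (hadj : G.Adj x y) (hy : y ∈ s) : y ∈ csupp G s c := by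
  obtain ⟨hxs, hc⟩ := mem_csupp.mp hx
  refine mem_csupp.mpr ⟨hy, ?_⟩
  rw [← hc]
  exact (SimpleGraph.ConnectedComponent.connectedComponentMk_eq_of_adj (induce_adj'.mpr hadj)).symm

lemma csupp_eq_of_mem {s : Set V} {c c' : (G.induce s).ConnectedComponent} {x : V}
    (h : x ∈ csupp G s c) (h' : x ∈ csupp G s c') : c = c' := by
  obtain ⟨hx, hc⟩ := mem_csupp.mp h
  obtain ⟨hx', hc'⟩ := mem_csupp.mp h'
  rw [← hc, ← hc']

lemma reachable_of_mem_csupp {s : Set V} {c : (G.induce s).ConnectedComponent} {x y : V}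
    (hx : x ∈ csupp G s c) (hy : y ∈ csupp G s c) :
    ∃ (hxs : x ∈ s) (hys : y ∈ s), (G.induce s).Reachable ⟨x, hxs⟩ ⟨y, hys⟩ := by
  obtain ⟨hxs, hc⟩ := mem_csupp.mp hx
  obtain ⟨hys, hc'⟩ := mem_csupp.mp hy
  refine ⟨hxs, hys, ?_⟩
  rw [← hc'] at hc
  exact (ConnectedComponent.exact hc)

lemma augment {M : Finset (Sym2 V)} (hM : good G A M) (hmax : M.card = nu G A) {u w : V}
    (hu : u ∈ A) (hw : w ∈ A) (hadj : G.Adj u w) (hcu : ¬ cov M u) (hcw : ¬ cov M w) :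
    False := by
  classical
  have hnotmem : s(u, w) ∉ M := fun h => hcu ⟨_, h, Sym2.mem_mk_left _ _⟩
  have good' : good G A (insert s(u, w) M) := by
    refine ⟨⟨?_, ?_⟩, ?_⟩
    · intro e he
      rcases Finset.mem_insert.mp he with rfl | h
      · exact (G.mem_edgeSet).mpr hadj
      · exact hM.1.1 e h
    · intro e he f hf hef v hve hvf
      rcases Finset.mem_insert.mp he with rfl | h <;> rcases Finset.mem_insert.mp hf with rfl | h'
      · exact hef rfl
      · rcases Sym2.mem_iff.mp hve with rfl | rfl
        · exact hcu ⟨f, h', hvf⟩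
        · exact hcw ⟨f, h', hvf⟩
      · rcases Sym2.mem_iff.mp hvf with rfl | rfl
        · exact hcu ⟨e, h, hve⟩
        · exact hcw ⟨e, h, hve⟩
      · exact hM.1.2 e h f h' hef v hve hvf
    · intro e he v hv
      rcases Finset.mem_insert.mp he with rfl | h
      · rcases Sym2.mem_iff.mp hv with rfl | rfl
        · exact hu
        · exact hw
      · exact hM.2 e h v hv
  have := card_le_nu good'
  rw [Finset.card_insert_of_notMem hnotmem] at this
  omega

lemma no_two_missed (hmiss : maxMissing G A) :
    ∀ (M : Finset (Sym2 V)), good G A M → M.card = nu G A →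
    ∀ (u v : ↥(↑A : Set V)), (G.induce (↑A : Set V)).Reachable u v → (u : V) ≠ (v : V) →
    ¬ cov M ↑u → ¬ cov M ↑v → False := by
  classical
  by_contra hcon
  push_neg at hcon
  obtain ⟨M, hMgood, hMmax, u, v, hreach, hne, hcu, hcv, -⟩ := hcon
  have hD : ∃ d, ∃ (M : Finset (Sym2 V)) (u v : ↥(↑A : Set V)), good G A M ∧
      M.card = nu G A ∧ (G.induce (↑A : Set V)).Reachable u v ∧ (u : V) ≠ (v : V) ∧
      ¬ cov M ↑u ∧ ¬ cov M ↑v ∧ (G.induce (↑A : Set V)).dist u v = d :=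
    ⟨_, M, u, v, hMgood, hMmax, hreach, hne, hcu, hcv, rfl⟩
  clear hcu hcv hne hreach hMmax hMgood
  obtain ⟨M, u, v, hMgood, hMmax, hreach, hne, hcu, hcv, hdist⟩ := Nat.find_spec hD
  set d0 := Nat.find hD with hd0def
  have hd0ne : d0 ≠ 0 := by
    intro h
    rw [h] at hdist
    exact (SimpleGraph.dist_ne_zero_iff_ne_and_reachable.mpr
      ⟨fun hh => hne (congrArg Subtype.val hh), hreach⟩) hdist
  have hd0ne1 : d0 ≠ 1 := by
    intro h
    rw [h] at hdist
    have hadj : (G.induce (↑A : Set V)).Adj u v := SimpleGraph.dist_eq_one_iff_adj.mp hdist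
    exact augment hMgood hMmax u.2 v.2 (induce_adj'.mp hadj) hcu hcv
  -- get a geodesic walk and its second vertex
  obtain ⟨p, hp⟩ := hreach.exists_walk_length_eq_dist
  rw [hdist] at hp
  cases p with
  | nil => rw [SimpleGraph.Walk.length_nil] at hp; omega
  | @cons _ b _ hadj q =>
    rw [SimpleGraph.Walk.length_cons] at hp
    have hbv : b ≠ v := by
      rintro rfl
      have : (G.induce (↑A : Set V)).dist u b = 1 :=
        SimpleGraph.dist_eq_one_iff_adj.mpr hadj
      rw [hdist] at this
      omega
    have hdistbv : (G.induce (↑A : Set V)).dist b v ≤ d0 - 1 := by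
      have := SimpleGraph.dist_le q
      omega
    have hbvval : (b : V) ≠ (v : V) := fun h => hbv (Subtype.ext h)
    have hcovb : cov M ↑b := by
      by_contra hcb
      exact Nat.find_min hD (m := (G.induce (↑A : Set V)).dist b v) (by omega)
        ⟨M, b, v, hMgood, hMmax, q.reachable, hbvval, hcb, hcv, rfl⟩
    obtain ⟨N, hNgood, hNmax, hNb⟩ := hmiss ↑b b.2
    rcases exchange hMgood.1 hNgood.1 hMgood.2 hNgood.2 hcovb hNb with
      ⟨N', hN'good, hN'card⟩ | ⟨M', x, hM'good, hM'card, hxM, hxb, hcov⟩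
    · have := card_le_nu hN'good
      omega
    · have hM'max : M'.card = nu G A := by omega
      have hM'b : ¬ cov M' ↑b := by
        rw [hcov]
        rintro (⟨-, h⟩ | h)
        · exact h rfl
        · exact hxb h.symm
      by_cases hxu : x = ↑u
      · -- M' misses v and b, dist b v < d0
        have hM'v : ¬ cov M' ↑v := by
          rw [hcov]
          rintro (⟨h, -⟩ | h)
          · exact hcv h
          · exact hne (hxu ▸ h).symm
        exact Nat.find_min hD (m := (G.induce (↑A : Set V)).dist b v) (by omega)
          ⟨M', b, v, hM'good, hM'max, q.reachable, hbvval, hM'b, hM'v, rfl⟩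
      · -- M' misses u and b, u b adjacent: augment
        have hM'u : ¬ cov M' ↑u := by
          rw [hcov]
          rintro (⟨h, -⟩ | h)
          · exact hcu h
          · exact hxu h.symm
        exact augment hM'good hM'max u.2 b.2 (induce_adj'.mp hadj) hM'u hM'b

/-- A perfect matching on `S` determines `|S| = 2|M|`. -/
lemma pm_card {S : Set V} {M : Finset (Sym2 V)} (hM : IsMatchingSet G M)
    (hsub : ∀ e ∈ M, ∀ v : V, v ∈ e → v ∈ S) (hcov : ∀ v ∈ S, ∃ e ∈ M, v ∈ e) :
    S.ncard = 2 * M.card := by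
  classical
  have hout : ∀ e : Sym2 V, e ∈ M → e = s((Quot.out e).1, (Quot.out e).2) := by
    intro e _
    exact (Quot.out_eq e).symm
  set F : Finset V := M.biUnion (fun e => {(Quot.out e).1, (Quot.out e).2}) with hF
  have hmemF : ∀ x, x ∈ F ↔ ∃ e ∈ M, x ∈ e := by
    intro x
    rw [Finset.mem_biUnion]
    constructor
    · rintro ⟨e, he, hx⟩
      rcases Finset.mem_insert.mp hx with rfl | hx
      · exact ⟨e, he, Sym2.out_fst_mem e⟩
      · rw [Finset.mem_singleton] at hx
        subst hx
        exact ⟨e, he, Sym2.out_snd_mem e⟩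
    · rintro ⟨e, he, hx⟩
      refine ⟨e, he, ?_⟩
      rw [hout e he] at hx
      rcases Sym2.mem_iff.mp hx with rfl | rfl
      · exact Finset.mem_insert_self _ _
      · exact Finset.mem_insert_of_mem (Finset.mem_singleton_self _)
  have hSF : S = ↑F := by
    ext x
    rw [Finset.mem_coe, hmemF]
    constructor
    · intro hx
      exact hcov x hx
    · rintro ⟨e, he, hx⟩
      exact hsub e he x hx
  have hdisj : ∀ e ∈ M, ∀ f ∈ M, e ≠ f →
      Disjoint ({(Quot.out e).1, (Quot.out e).2} : Finset V)
        ({(Quot.out f).1, (Quot.out f).2} : Finset V) := by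
    intro e he f hf hef
    rw [Finset.disjoint_left]
    intro x hx hx'
    have hxe : x ∈ e := by
      rw [hout e he]
      rcases Finset.mem_insert.mp hx with rfl | hx
      · exact Sym2.mem_mk_left _ _
      · rw [Finset.mem_singleton] at hx
        subst hx
        exact Sym2.mem_mk_right _ _
    have hxf : x ∈ f := by
      rw [hout f hf]
      rcases Finset.mem_insert.mp hx' with rfl | hx'
      · exact Sym2.mem_mk_left _ _
      · rw [Finset.mem_singleton] at hx'
        subst hx'
        exact Sym2.mem_mk_right _ _
    exact hef (mem_unique hM he hf hxe hxf)
  have hcard2 : ∀ e ∈ M, ({(Quot.out e).1, (Quot.out e).2} : Finset V).card = 2 := by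
    intro e he
    rw [Finset.card_insert_of_notMem, Finset.card_singleton]
    rw [Finset.mem_singleton]
    have hadj : G.Adj (Quot.out e).1 (Quot.out e).2 := by
      have := hM.1 e he
      rw [hout e he] at this
      exact (G.mem_edgeSet).mp this
    exact hadj.ne
  rw [hSF, Set.ncard_coe_finset, hF, Finset.card_biUnion hdisj,
    Finset.sum_congr rfl hcard2, Finset.sum_const, smul_eq_mul, Nat.mul_comm]

lemma pm_even {S : Set V} (h : HasPerfectMatchingOn G S) : Even S.ncard := by
  obtain ⟨M, hM, hsub, hcov⟩ := h
  rw [pm_card hM hsub hcov]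
  exact even_two_mul _

lemma matching_subset {M M' : Finset (Sym2 V)} (h : M' ⊆ M) (hM : IsMatchingSet G M) :
    IsMatchingSet G M' :=
  ⟨fun e he => hM.1 e (h he), fun e he f hf hef v hv => hM.2 e (h he) f (h hf) hef v hv⟩

lemma factor_critical (hmiss : maxMissing G A)
    (c : (G.induce (↑A : Set V)).ConnectedComponent) {v : V}
    (hv : v ∈ csupp G (↑A : Set V) c) :
    HasPerfectMatchingOn G (csupp G (↑A : Set V) c \ {v}) := by
  classical
  have hvA : v ∈ A := Finset.mem_coe.mp (csupp_subset hv)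
  obtain ⟨N, hNgood, hNmax, hNv⟩ := hmiss v hvA
  set Mc := N.filter (fun e => ∀ x ∈ e, x ∈ csupp G (↑A : Set V) c) with hMc
  refine ⟨Mc, matching_subset (Finset.filter_subset _ _) hNgood.1, ?_, ?_⟩
  · intro e he x hx
    rw [hMc, Finset.mem_filter] at he
    refine ⟨he.2 x hx, ?_⟩
    simp only [Set.mem_singleton_iff]
    rintro rfl
    exact hNv ⟨e, he.1, hx⟩
  · intro x hx
    obtain ⟨hxc, hxv⟩ := hx
    rw [Set.mem_singleton_iff] at hxv
    have hcovx : cov N x := by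
      by_contra hc
      obtain ⟨hxs, hvs, hreach⟩ := reachable_of_mem_csupp hxc hv
      exact no_two_missed hmiss N hNgood hNmax ⟨x, hxs⟩ ⟨v, hvs⟩ hreach hxv hc hNv
    obtain ⟨e, he, hxe⟩ := hcovx
    obtain ⟨w, rfl, hadj⟩ := exists_partner hNgood.1 he hxe
    refine ⟨s(x, w), Finset.mem_filter.mpr ⟨he, ?_⟩, Sym2.mem_mk_left _ _⟩
    intro y hy
    rcases Sym2.mem_iff.mp hy with rfl | rfl
    · exact hxc
    · exact csupp_closed hxc hadj (hNgood.2 _ he _ (Sym2.mem_mk_right _ _))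

lemma csupp_odd (hmiss : maxMissing G A)
    (c : (G.induce (↑A : Set V)).ConnectedComponent) :
    Odd (csupp G (↑A : Set V) c).ncard := by
  obtain ⟨v, hv⟩ := csupp_nonempty c
  obtain ⟨k, hk⟩ := pm_even (factor_critical hmiss c hv)
  have h1 := Set.ncard_diff_singleton_add_one hv (Set.toFinite _)
  exact ⟨k, by omega⟩

lemma exists_missed (hmiss : maxMissing G A) {M : Finset (Sym2 V)}
    (hgood : good G A M) (c : (G.induce (↑A : Set V)).ConnectedComponent) :
    ∃ x ∈ csupp G (↑A : Set V) c, ¬ cov M x := by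
  classical
  by_contra h
  push_neg at h
  have hpm : HasPerfectMatchingOn G (csupp G (↑A : Set V) c) := by
    refine ⟨M.filter (fun e => ∀ x ∈ e, x ∈ csupp G (↑A : Set V) c),
      matching_subset (Finset.filter_subset _ _) hgood.1, ?_, ?_⟩
    · intro e he x hx
      rw [Finset.mem_filter] at he
      exact he.2 x hx
    · intro x hx
      obtain ⟨e, he, hxe⟩ := h x hx
      obtain ⟨w, rfl, hadj⟩ := exists_partner hgood.1 he hxe
      refine ⟨s(x, w), Finset.mem_filter.mpr ⟨he, ?_⟩, Sym2.mem_mk_left _ _⟩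
      intro y hy
      rcases Sym2.mem_iff.mp hy with rfl | rfl
      · exact hx
      · exact csupp_closed hx hadj (hgood.2 _ he _ (Sym2.mem_mk_right _ _))
  exact (Nat.not_even_iff_odd.mpr (csupp_odd hmiss c)) (pm_even hpm)

lemma case2_count (hmiss : maxMissing G A) :
    2 * nu G A + {c : (G.induce (↑A : Set V)).ConnectedComponent |
      Odd (csupp G (↑A : Set V) c).ncard}.ncard = A.card := by
  classical
  have hodds : {c : (G.induce (↑A : Set V)).ConnectedComponent |
      Odd (csupp G (↑A : Set V) c).ncard} = Set.univ :=
    Set.eq_univ_of_forall (fun c => csupp_odd hmiss c)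
  haveI hfin : Finite ((G.induce (↑A : Set V)).ConnectedComponent) := Quot.finite _
  letI : Fintype ((G.induce (↑A : Set V)).ConnectedComponent) := Fintype.ofFinite _
  rw [hodds, Set.ncard_univ, Nat.card_eq_fintype_card]
  have up : 2 * nu G A + Fintype.card ((G.induce (↑A : Set V)).ConnectedComponent)
      ≤ A.card := by
    obtain ⟨M, hgood, hmax⟩ := exists_maxM G A
    set Acov : Set V := {x | x ∈ A ∧ cov M x} with hAcov
    set Amiss : Set V := {x | x ∈ A ∧ ¬ cov M x} with hAmiss
    have h1 : Acov.ncard = 2 * M.card := by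
      refine pm_card hgood.1 (fun e he v hv => ⟨hgood.2 e he v hv, ⟨e, he, hv⟩⟩)
        (fun v hv => hv.2)
    have hsplit : Acov.ncard + Amiss.ncard = A.card := by
      have hu : Acov ∪ Amiss = ↑A := by
        ext x
        simp only [hAcov, hAmiss, Set.mem_union, Set.mem_setOf_eq, Finset.mem_coe]
        by_cases h : cov M x <;> tauto
      rw [← Set.ncard_union_eq (by
        rw [Set.disjoint_left]
        rintro x ⟨-, h⟩ ⟨-, h'⟩
        exact h' h) (Set.toFinite _) (Set.toFinite _), hu, Set.ncard_coe_finset]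
    have hinj : Fintype.card ((G.induce (↑A : Set V)).ConnectedComponent)
        ≤ Amiss.ncard := by
      choose φ hφ1 hφ2 using fun c => exists_missed hmiss hgood c
      have h := Set.ncard_le_ncard_of_injOn
        (s := (Set.univ : Set ((G.induce (↑A : Set V)).ConnectedComponent)))
        (t := Amiss) φ
        (fun c _ => (⟨Finset.mem_coe.mp (csupp_subset (hφ1 c)), hφ2 c⟩ :
          φ c ∈ Amiss))
        (fun c _ c' _ h => csupp_eq_of_mem (hφ1 c) (h ▸ hφ1 c'))
        (Set.toFinite Amiss)
      rwa [Set.ncard_univ, Nat.card_eq_fintype_card] at h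
    omega
  have down : A.card ≤ 2 * nu G A +
      Fintype.card ((G.induce (↑A : Set V)).ConnectedComponent) := by
    choose vsel hvsel using fun c : (G.induce (↑A : Set V)).ConnectedComponent =>
      csupp_nonempty (G := G) c
    choose Mc hMc1 hMc2 hMc3 using fun c : (G.induce (↑A : Set V)).ConnectedComponent =>
      factor_critical hmiss c (hvsel c)
    have hcardc : ∀ c, (csupp G (↑A : Set V) c).ncard = 2 * (Mc c).card + 1 := by
      intro c
      have h1 := pm_card (hMc1 c) (hMc2 c) (hMc3 c)
      have h2 := Set.ncard_diff_singleton_add_one (hvsel c) (Set.toFinite _)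
      omega
    have hvertc : ∀ c, ∀ e ∈ Mc c, ∀ v ∈ e, v ∈ csupp G (↑A : Set V) c :=
      fun c e he v hv => ((hMc2 c) e he v hv).1
    set Mbig := Finset.univ.biUnion Mc with hMbig
    have hMbiggood : good G A Mbig := by
      refine ⟨⟨?_, ?_⟩, ?_⟩
      · intro e he
        obtain ⟨c, -, he⟩ := Finset.mem_biUnion.mp he
        exact (hMc1 c).1 e he
      · intro e he f hf hef v hve hvf
        obtain ⟨c, -, he⟩ := Finset.mem_biUnion.mp he
        obtain ⟨c', -, hf⟩ := Finset.mem_biUnion.mp hf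
        have : c = c' := csupp_eq_of_mem (hvertc c e he v hve) (hvertc c' f hf v hvf)
        subst this
        exact (hMc1 c).2 e he f hf hef v hve hvf
      · intro e he v hv
        obtain ⟨c, -, he⟩ := Finset.mem_biUnion.mp he
        exact Finset.mem_coe.mp (csupp_subset (hvertc c e he v hv))
    have hcardbig : Mbig.card = ∑ c, (Mc c).card := by
      refine Finset.card_biUnion ?_
      intro c _ c' _ hcc
      rw [Function.onFun, Finset.disjoint_left]
      intro e he he'
      exact hcc (csupp_eq_of_mem (hvertc c e he _ (Sym2.out_fst_mem e))
        (hvertc c' e he' _ (Sym2.out_fst_mem e)))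
    have hsum : ∑ c, (csupp G (↑A : Set V) c).ncard = A.card := by
      have hbu : Finset.univ.biUnion
          (fun c : (G.induce (↑A : Set V)).ConnectedComponent =>
            (Set.toFinite (csupp G (↑A : Set V) c)).toFinset) = A := by
        ext x
        rw [Finset.mem_biUnion]
        constructor
        · rintro ⟨c, -, hc⟩
          rw [Set.Finite.mem_toFinset] at hc
          exact Finset.mem_coe.mp (csupp_subset hc)
        · intro hx
          refine ⟨(G.induce (↑A : Set V)).connectedComponentMk ⟨x, Finset.mem_coe.mpr hx⟩,
            Finset.mem_univ _, ?_⟩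
          rw [Set.Finite.mem_toFinset]
          exact mem_csupp.mpr ⟨Finset.mem_coe.mpr hx, rfl⟩
      have hdis : ∀ c ∈ Finset.univ, ∀ c' ∈ Finset.univ, c ≠ c' →
          Disjoint ((Set.toFinite (csupp G (↑A : Set V) c)).toFinset)
            ((Set.toFinite (csupp G (↑A : Set V) c')).toFinset) := by
        intro c _ c' _ hcc
        rw [Finset.disjoint_left]
        intro x hx hx'
        rw [Set.Finite.mem_toFinset] at hx hx'
        exact hcc (csupp_eq_of_mem hx hx')
      calc ∑ c, (csupp G (↑A : Set V) c).ncard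
          = ∑ c, ((Set.toFinite (csupp G (↑A : Set V) c)).toFinset).card :=
            Finset.sum_congr rfl (fun c _ => Set.ncard_eq_toFinset_card _ _)
        _ = (Finset.univ.biUnion
              (fun c => (Set.toFinite (csupp G (↑A : Set V) c)).toFinset)).card :=
            (Finset.card_biUnion hdis).symm
        _ = A.card := by rw [hbu]
    have hle := card_le_nu hMbiggood
    have : ∑ c, (csupp G (↑A : Set V) c).ncard
        = 2 * (∑ c, (Mc c).card) + Fintype.card ((G.induce (↑A : Set V)).ConnectedComponent) := by
      rw [Finset.sum_congr rfl (fun c _ => hcardc c), Finset.sum_add_distrib,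
        Finset.sum_const, Finset.mul_sum, Finset.card_univ, smul_eq_mul, mul_one]
    omega
  omega

theorem main (G : SimpleGraph V) (A : Finset V) :
    ∃ T : Finset V, T ⊆ A ∧ T.card ≤ nu G A ∧
      2 * nu G A + {c : (G.induce ((↑A : Set V) \ (↑T : Set V))).ConnectedComponent |
        Odd (csupp G ((↑A : Set V) \ (↑T : Set V)) c).ncard}.ncard = A.card + T.card ∧
      (∀ c : (G.induce ((↑A : Set V) \ (↑T : Set V))).ConnectedComponent,
        Odd (csupp G ((↑A : Set V) \ (↑T : Set V)) c).ncard →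
          ∀ v ∈ csupp G ((↑A : Set V) \ (↑T : Set V)) c,
            HasPerfectMatchingOn G (csupp G ((↑A : Set V) \ (↑T : Set V)) c \ {v})) ∧
      (∀ c : (G.induce ((↑A : Set V) \ (↑T : Set V))).ConnectedComponent,
        ¬ Odd (csupp G ((↑A : Set V) \ (↑T : Set V)) c).ncard →
          HasPerfectMatchingOn G (csupp G ((↑A : Set V) \ (↑T : Set V)) c)) := by
  classical
  induction A using Finset.strongInduction with
  | _ A ih =>
  by_cases hcase : maxMissing G A
  · refine ⟨∅, Finset.empty_subset A, Nat.zero_le _, ?_⟩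
    rw [Finset.coe_empty, Set.diff_empty]
    refine ⟨by simpa using case2_count hcase,
      fun c _ v hv => factor_critical hcase c hv,
      fun c hc => absurd (csupp_odd hcase c) hc⟩
  · rw [maxMissing] at hcase
    push_neg at hcase
    obtain ⟨v, hvA, hvcov⟩ := hcase
    have hvcov' : ∀ N, good G A N → N.card = nu G A → cov N v := hvcov
    have hnuA1 : 1 ≤ nu G A := by
      by_contra h
      obtain ⟨e, he, -⟩ := hvcov' ∅ (good_empty A) (by rw [Finset.card_empty]; omega)
      exact absurd he (Finset.notMem_empty e)
    have hup : nu G A ≤ nu G (A.erase v) + 1 := by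
      obtain ⟨M, hgood, hmax⟩ := exists_maxM G A
      obtain ⟨e, he, hve⟩ := hvcov' M hgood hmax
      have hgood' : good G (A.erase v) (M.erase e) := by
        refine ⟨⟨fun f hf => hgood.1.1 f (Finset.mem_of_mem_erase hf),
          fun f hf g hg => hgood.1.2 f (Finset.mem_of_mem_erase hf) g
            (Finset.mem_of_mem_erase hg)⟩, ?_⟩
        intro f hf x hx
        rw [Finset.mem_erase] at hf
        refine Finset.mem_erase.mpr ⟨?_, hgood.2 f hf.2 x hx⟩
        intro hxv
        exact hgood.1.2 f hf.2 e he hf.1 x hx (by rw [hxv]; exact hve)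
      have := card_le_nu hgood'
      rw [Finset.card_erase_of_mem he] at this
      omega
    have hdown : nu G (A.erase v) + 1 ≤ nu G A := by
      obtain ⟨M', hgood', hmax'⟩ := exists_maxM G (A.erase v)
      have hgoodA : good G A M' :=
        ⟨hgood'.1, fun e he x hx => Finset.mem_of_mem_erase (hgood'.2 e he x hx)⟩
      have hle := card_le_nu hgoodA
      rcases Nat.lt_or_ge M'.card (nu G A) with h | h
      · omega
      · exfalso
        obtain ⟨e, he, hve⟩ := hvcov' M' hgoodA (by omega)
        have := hgood'.2 e he v hve
        rw [Finset.mem_erase] at this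
        exact this.1 rfl
    obtain ⟨T', hT'sub, hT'card, hcount, hodd, heven⟩ := ih (A.erase v)
      (Finset.erase_ssubset hvA)
    have hvT' : v ∉ T' := fun h => (Finset.mem_erase.mp (hT'sub h)).1 rfl
    have hset : (↑A : Set V) \ (↑(insert v T') : Set V)
        = (↑(A.erase v) : Set V) \ (↑T' : Set V) := by
      ext x
      simp only [Finset.coe_insert, Set.mem_diff, Set.mem_insert_iff, Finset.mem_coe,
        Finset.coe_erase, Set.mem_singleton_iff, Finset.mem_erase]
      tauto
    refine ⟨insert v T', Finset.insert_subset hvA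
      (hT'sub.trans (Finset.erase_subset v A)), ?_, ?_⟩
    · rw [Finset.card_insert_of_notMem hvT']
      omega
    · rw [hset]
      refine ⟨?_, hodd, heven⟩
      rw [Finset.card_insert_of_notMem hvT']
      rw [Finset.card_erase_of_mem hvA] at hcount
      have hA1 : 1 ≤ A.card := Finset.card_pos.mpr ⟨v, hvA⟩
      omega

end GE

/-- Tutte–Berge formula with the Gallai–Edmonds refinement: there is `T ⊆ V(G)` with
`|T| ≤ β(G)` and `β(G) = (n - o(G-T) + |T|)/2`; each odd component of `G - T` is
factor-critical and each even component has a perfect matching. -/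
theorem stmt4 {V : Type*} [Fintype V] (G : SimpleGraph V) :
    ∃ T : Finset V, T.card ≤ matchingNumber G ∧
      2 * matchingNumber G + oddComponents G T = Fintype.card V + T.card ∧
      (∀ c : (G.induce ((↑T : Set V)ᶜ)).ConnectedComponent,
        Odd (compSupp G T c).ncard →
          ∀ v ∈ compSupp G T c, HasPerfectMatchingOn G (compSupp G T c \ {v})) ∧
      (∀ c : (G.induce ((↑T : Set V)ᶜ)).ConnectedComponent,
        ¬ Odd (compSupp G T c).ncard → HasPerfectMatchingOn G (compSupp G T c)) := by
  classical
  obtain ⟨T, hTsub, hTcard, hcount, hodd, heven⟩ := GE.main G Finset.univ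
  have hset : ((↑(Finset.univ : Finset V) : Set V) \ (↑T : Set V)) = ((↑T : Set V))ᶜ := by
    rw [Finset.coe_univ, Set.compl_eq_univ_diff]
  rw [hset] at hcount hodd heven
  have hnueq : matchingNumber G = GE.nu G Finset.univ := by
    unfold matchingNumber GE.nu
    congr 1
    ext k
    constructor
    · rintro ⟨M, hM, rfl⟩
      exact ⟨M, ⟨hM, fun e he x hx => Finset.mem_univ x⟩, rfl⟩
    · rintro ⟨M, ⟨hM, -⟩, rfl⟩
      exact ⟨M, hM, rfl⟩
  refine ⟨T, ?_, ?_, hodd, heven⟩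
  · rw [hnueq]
    exact hTcard
  · rw [hnueq]
    show 2 * GE.nu G Finset.univ +
      {c : (G.induce ((↑T : Set V)ᶜ)).ConnectedComponent |
        Odd (GE.csupp G ((↑T : Set V)ᶜ) c).ncard}.ncard = Fintype.card V + T.card
    rw [← Finset.card_univ]
    exact hcount
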